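/- Let f : ℕ^k → ℂ be a function of k variables (not necessarily multiplicative) such that Σ_{n_1,…,n_k ≥ 1} |(μ ∗ f)(n_1,…,n_k)| / (n_1 ⋯ n_k) < ∞. Then the mean value M(f) exists and M(f) = Σ_{n_1,…,n_k ≥ 1} (μ ∗ f)(n_1,…,n_k) / (n_1 ⋯ n_k). -/

import Mathlib

open Filter Finset ArithmeticFunction Topology
open scoped ArithmeticFunction.Moebius ArithmeticFunction.zeta


private lemma sum_moeb (n : ℕ) :
    (∑ d ∈ n.divisors, (μ d : ℂ)) = if n = 1 then 1 else 0 := by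
  have h := congrArg (fun F : ArithmeticFunction ℤ => F n) moebius_mul_coe_zeta
  simp only [mul_apply, one_apply] at h
  have h2 : (∑ x ∈ n.divisorsAntidiagonal, μ x.1 * (ζ : ArithmeticFunction ℤ) x.2)
      = ∑ x ∈ n.divisorsAntidiagonal, μ x.1 := by
    refine Finset.sum_congr rfl fun x hx => ?_
    rw [Nat.mem_divisorsAntidiagonal] at hx
    have h0 : x.2 ≠ 0 := by intro h0; rw [h0] at hx; simp at hx; omega
    simp [natCoe_apply, zeta_apply, h0]
  rw [h2, Nat.sum_divisorsAntidiagonal (fun d _ => (μ d : ℤ))] at h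
  have h4 := congrArg (fun z : ℤ => (z : ℂ)) h
  push_cast at h4
  rw [h4]

private lemma tendsto_nat_div (m : ℕ) (hm : 0 < m) :
    Tendsto (fun x : ℕ => ((x / m : ℕ) : ℝ) / (x : ℝ)) atTop (𝓝 (1 / (m : ℝ))) := by
  have hlow : Tendsto (fun x : ℕ => 1 / (m:ℝ) - 1 / (x:ℝ)) atTop (𝓝 (1 / (m:ℝ))) := by
    simpa using (tendsto_const_nhds (x := 1 / (m:ℝ))).sub tendsto_one_div_atTop_nhds_zero_nat
  refine tendsto_of_tendsto_of_tendsto_of_le_of_le' hlow tendsto_const_nhds ?_ ?_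
  · filter_upwards [eventually_ge_atTop 1] with x hx
    have hx0 : (0:ℝ) < (x:ℝ) := by exact_mod_cast hx
    have hm0 : (0:ℝ) < (m:ℝ) := by exact_mod_cast hm
    have key : (x:ℝ) < ((x / m : ℕ) + 1) * m := by
      have h1 : x / m * m + x % m = x := Nat.div_add_mod' x m
      have h2 : x % m < m := Nat.mod_lt x hm
      have : x < (x / m + 1) * m := by
        calc x = x / m * m + x % m := h1.symm
        _ < x / m * m + m := by omega
        _ = (x / m + 1) * m := by ring
      exact_mod_cast this
    rw [div_sub_div _ _ (ne_of_gt hm0) (ne_of_gt hx0), div_le_div_iff₀ (by positivity) hx0]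
    nlinarith [key]
  · filter_upwards [eventually_ge_atTop 1] with x hx
    have hx0 : (0:ℝ) < (x:ℝ) := by exact_mod_cast hx
    have hm0 : (0:ℝ) < (m:ℝ) := by exact_mod_cast hm
    rw [div_le_div_iff₀ hx0 hm0]
    have : ((x / m : ℕ) : ℝ) * m ≤ x := by exact_mod_cast Nat.div_mul_le_self x m
    linarith


private lemma inversion (k : ℕ) (f : (Fin k → ℕ) → ℂ) (n : Fin k → ℕ) (hn : ∀ i, 0 < n i) :
    ∑ d ∈ Fintype.piFinset (fun i => (n i).divisors),
      ∑ e ∈ Fintype.piFinset (fun i => (d i).divisors),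
        (∏ i, (μ (e i) : ℂ)) * f (fun i => d i / e i) = f n := by
  have key : (∑ d ∈ Fintype.piFinset (fun i => (n i).divisors),
        ∑ e ∈ Fintype.piFinset (fun i => (d i).divisors),
          (∏ i, (μ (e i) : ℂ)) * f (fun i => d i / e i))
      = ∑ m ∈ Fintype.piFinset (fun i => (n i).divisors),
        ∑ e ∈ Fintype.piFinset (fun i => (n i / m i).divisors),
          (∏ i, (μ (e i) : ℂ)) * f m := by
    rw [Finset.sum_sigma', Finset.sum_sigma']
    refine Finset.sum_bij' (fun p _ => ⟨fun i => p.1 i / p.2 i, p.2⟩)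
      (fun q _ => ⟨fun i => q.1 i * q.2 i, q.2⟩) ?_ ?_ ?_ ?_ ?_
    · rintro ⟨d, e⟩ hp
      rw [Finset.mem_sigma] at hp ⊢
      obtain ⟨hd, he⟩ := hp
      simp only [Fintype.mem_piFinset] at hd he ⊢
      refine ⟨fun i => ?_, fun i => ?_⟩
      · have h1 := Nat.mem_divisors.mp (hd i)
        have h2 := Nat.mem_divisors.mp (he i)
        exact Nat.mem_divisors.mpr ⟨(Nat.div_dvd_of_dvd h2.1).trans h1.1, h1.2⟩
      · have h1 := Nat.mem_divisors.mp (hd i)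
        have h2 := Nat.mem_divisors.mp (he i)
        refine Nat.mem_divisors.mpr ⟨?_, ?_⟩
        · rw [Nat.dvd_div_iff_mul_dvd ((Nat.div_dvd_of_dvd h2.1).trans h1.1),
            Nat.div_mul_cancel h2.1]
          exact h1.1
        · have hde : d i / e i ∣ n i := (Nat.div_dvd_of_dvd h2.1).trans h1.1
          have hde0 : 0 < d i / e i := Nat.div_pos
            (Nat.le_of_dvd (Nat.pos_of_ne_zero h2.2) h2.1) (Nat.pos_of_mem_divisors (he i))
          exact (Nat.div_pos (Nat.le_of_dvd (Nat.pos_of_ne_zero h1.2) hde) hde0).ne'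
    · rintro ⟨m, e⟩ hq
      rw [Finset.mem_sigma] at hq ⊢
      obtain ⟨hm, he⟩ := hq
      simp only [Fintype.mem_piFinset] at hm he ⊢
      refine ⟨fun i => ?_, fun i => ?_⟩
      · have h1 := Nat.mem_divisors.mp (hm i)
        have h2 := Nat.mem_divisors.mp (he i)
        refine Nat.mem_divisors.mpr ⟨?_, h1.2⟩
        exact (Nat.dvd_div_iff_mul_dvd h1.1).mp h2.1
      · have hm0 := Nat.pos_of_mem_divisors (hm i)
        have he0 := Nat.pos_of_mem_divisors (he i)
        exact Nat.mem_divisors.mpr ⟨dvd_mul_left _ _, by positivity⟩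
    · rintro ⟨d, e⟩ hp
      rw [Finset.mem_sigma] at hp
      obtain ⟨hd, he⟩ := hp
      simp only [Fintype.mem_piFinset] at hd he
      refine Sigma.ext ?_ (heq_of_eq rfl)
      funext i
      exact Nat.div_mul_cancel (Nat.mem_divisors.mp (he i)).1
    · rintro ⟨m, e⟩ hq
      rw [Finset.mem_sigma] at hq
      obtain ⟨hm, he⟩ := hq
      simp only [Fintype.mem_piFinset] at hm he
      refine Sigma.ext ?_ (heq_of_eq rfl)
      funext i
      exact Nat.mul_div_cancel _ (Nat.pos_of_mem_divisors (he i))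
    · rintro ⟨d, e⟩ _
      rfl
  rw [key]
  have step2 : ∀ m ∈ Fintype.piFinset fun i => (n i).divisors,
      (∑ e ∈ Fintype.piFinset fun i => (n i / m i).divisors,
        (∏ i, (μ (e i) : ℂ)) * f m)
      = f m * ∏ i, (if n i / m i = 1 then (1:ℂ) else 0) := by
    intro m _
    rw [← Finset.sum_mul, mul_comm]
    congr 1
    rw [← Finset.prod_univ_sum (fun i => (n i / m i).divisors) (fun i x => (μ x : ℂ))]
    exact Finset.prod_congr rfl fun i _ => sum_moeb _
  rw [Finset.sum_congr rfl step2]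
  have hmem : n ∈ Fintype.piFinset fun i => (n i).divisors := by
    simp only [Fintype.mem_piFinset]
    exact fun i => Nat.mem_divisors_self _ (hn i).ne'
  rw [Finset.sum_eq_single_of_mem n hmem ?_]
  · have hd : ∀ i, n i / n i = 1 := fun i => Nat.div_self (hn i)
    simp [hd]
  · intro m hm hmn
    simp only [Fintype.mem_piFinset] at hm
    obtain ⟨i, hi⟩ : ∃ i, m i ≠ n i := by
      by_contra hc; push_neg at hc; exact hmn (funext hc)
    have h1 := Nat.mem_divisors.mp (hm i)
    have hne : n i / m i ≠ 1 := by
      intro h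
      have := Nat.div_mul_cancel h1.1
      rw [h, one_mul] at this
      exact hi this
    rw [Finset.prod_eq_zero (Finset.mem_univ i) (by simp [hne]), mul_zero]


private lemma swap_sum (k : ℕ) (f G : (Fin k → ℕ) → ℂ)
    (hinv : ∀ n : Fin k → ℕ, (∀ i, 0 < n i) →
      ∑ d ∈ Fintype.piFinset (fun i => (n i).divisors), G d = f n)
    (x : Fin k → ℕ) :
    ∑ n ∈ Fintype.piFinset (fun i => Finset.Icc 1 (x i)), f n
      = ∑ d ∈ Fintype.piFinset (fun i => Finset.Icc 1 (x i)),
          G d * ∏ i, ((x i / d i : ℕ) : ℂ) := by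
  have h1 : ∑ n ∈ Fintype.piFinset (fun i => Finset.Icc 1 (x i)), f n
      = ∑ n ∈ Fintype.piFinset (fun i => Finset.Icc 1 (x i)),
          ∑ d ∈ Fintype.piFinset (fun i => (n i).divisors), G d := by
    refine Finset.sum_congr rfl fun n hn => ?_
    simp only [Fintype.mem_piFinset, Finset.mem_Icc] at hn
    exact (hinv n (fun i => (hn i).1)).symm
  rw [h1]
  rw [Finset.sum_comm' (t' := Fintype.piFinset (fun i => Finset.Icc 1 (x i)))
    (s' := fun d => (Fintype.piFinset (fun i => Finset.Icc 1 (x i))).filter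
      (fun n => ∀ i, d i ∣ n i)) ?_]
  · refine Finset.sum_congr rfl fun d hd => ?_
    rw [Finset.sum_const, nsmul_eq_mul, mul_comm]
    congr 1
    have heq : (Fintype.piFinset (fun i => Finset.Icc 1 (x i))).filter
        (fun n => ∀ i, d i ∣ n i)
        = Fintype.piFinset (fun i => (Finset.Icc 1 (x i)).filter (fun m => d i ∣ m)) := by
      ext n
      simp only [Finset.mem_filter, Fintype.mem_piFinset]
      exact forall_and.symm
    rw [heq, Fintype.card_piFinset]
    push_cast
    refine Finset.prod_congr rfl fun i _ => ?_
    congr 1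
    have : Finset.Icc 1 (x i) = Finset.Ioc 0 (x i) := rfl
    rw [this, Nat.Ioc_filter_dvd_card_eq_div]
  · intro n d
    simp only [Fintype.mem_piFinset, Finset.mem_Icc, Finset.mem_filter, Nat.mem_divisors]
    constructor
    · rintro ⟨hn, hd⟩
      refine ⟨⟨fun i => hn i, fun i => (hd i).1⟩, fun i => ?_⟩
      have h1 := (hn i).1
      have h2 := (hn i).2
      have h3 := (hd i).1
      exact ⟨Nat.pos_of_dvd_of_pos h3 (by omega), (Nat.le_of_dvd (by omega) h3).trans h2⟩
    · rintro ⟨⟨hn, hdvd⟩, _⟩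
      exact ⟨fun i => hn i, fun i => ⟨hdvd i, by have := (hn i).1; omega⟩⟩


private lemma tendsto_nat_div_c (m : ℕ) (hm : 0 < m) :
    Tendsto (fun x : ℕ => ((x / m : ℕ) : ℂ) / (x : ℂ)) atTop (𝓝 (1 / (m : ℂ))) := by
  have h := (Complex.continuous_ofReal.tendsto _).comp (tendsto_nat_div m hm)
  have : (fun x : ℕ => (((((x / m : ℕ) : ℝ)) / (x : ℝ) : ℝ) : ℂ))
      = fun x : ℕ => ((x / m : ℕ) : ℂ) / (x : ℂ) := by
    funext x; push_cast; ring
  rw [Function.comp_def, this] at h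
  convert h using 2
  push_cast; ring

private lemma tendsto_eval (k : ℕ) (i : Fin k) :
    Tendsto (fun x : Fin k → ℕ => x i) atTop atTop :=
  tendsto_atTop_atTop.2 fun b => ⟨fun _ => b, fun x hx => hx i⟩



/-- Generalized Wintner theorem (Ushiroya): if
`Σ_n |(μ ∗ f)(n_1,…,n_k)| / (n_1⋯n_k) < ∞`, then the mean value `M(f)` exists
(the limit being taken independently in each variable) and equals
`Σ_n (μ ∗ f)(n_1,…,n_k) / (n_1⋯n_k)`. -/
theorem stmt_11 (k : ℕ) (f : (Fin k → ℕ) → ℂ)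
    (h : Summable fun n : Fin k → ℕ+ =>
      ‖∑ d ∈ Fintype.piFinset fun i => ((n i : ℕ)).divisors,
          (∏ i, (ArithmeticFunction.moebius (d i) : ℂ)) *
            f (fun i => (n i : ℕ) / d i)‖ /
        ∏ i, ((n i : ℕ) : ℝ)) :
    Tendsto (fun x : Fin k → ℕ =>
        (∑ n ∈ Fintype.piFinset fun i => Finset.Icc 1 (x i), f n) /
          ∏ i, ((x i : ℂ)))
      atTop
      (nhds (∑' n : Fin k → ℕ+,
        (∑ d ∈ Fintype.piFinset fun i => ((n i : ℕ)).divisors,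
            (∏ i, (ArithmeticFunction.moebius (d i) : ℂ)) *
              f (fun i => (n i : ℕ) / d i)) /
          ∏ i, ((n i : ℕ) : ℂ))) := by
  classical
  set G : (Fin k → ℕ) → ℂ := fun m =>
    ∑ d ∈ Fintype.piFinset (fun i => (m i).divisors),
      (∏ i, (μ (d i) : ℂ)) * f (fun i => m i / d i) with hG
  -- the summand in the limit
  set u : (Fin k → ℕ) → (Fin k → ℕ+) → ℂ := fun x d =>
    if ∀ i, (d i : ℕ) ≤ x i then
      G (fun i => (d i : ℕ)) * ∏ i, (((x i / (d i : ℕ) : ℕ) : ℂ) / ((x i : ℕ) : ℂ))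
    else 0 with hu
  have hGL : ∀ n : Fin k → ℕ+,
      (∑ d ∈ Fintype.piFinset fun i => ((n i : ℕ)).divisors,
          (∏ i, (μ (d i) : ℂ)) * f (fun i => (n i : ℕ) / d i))
        = G (fun i => (n i : ℕ)) := fun n => rfl
  have hinv : ∀ n : Fin k → ℕ, (∀ i, 0 < n i) →
      ∑ d ∈ Fintype.piFinset (fun i => (n i).divisors), G d = f n :=
    fun n hn => inversion k f n hn
  -- step 1: identify the partial averages with a tsum
  have key : ∀ x : Fin k → ℕ,
      (∑ n ∈ Fintype.piFinset fun i => Finset.Icc 1 (x i), f n) / (∏ i, ((x i : ℕ) : ℂ))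
        = ∑' d : Fin k → ℕ+, u x d := by
    intro x
    set v : (Fin k → ℕ) → ℂ := fun m =>
      if ∀ i, 1 ≤ m i ∧ m i ≤ x i then
        G m * ∏ i, (((x i / m i : ℕ) : ℂ) / ((x i : ℕ) : ℂ))
      else 0 with hv
    have hcomp : ∀ d : Fin k → ℕ+, u x d = v (fun i => (d i : ℕ)) := by
      intro d
      simp only [hu, hv]
      refine if_congr ?_ rfl rfl
      exact ⟨fun hd i => ⟨(d i).one_le, hd i⟩, fun hd i => (hd i).2⟩
    have hinj : Function.Injective (fun (d : Fin k → ℕ+) (i : Fin k) => (d i : ℕ)) := by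
      intro a b hab
      funext i
      exact PNat.coe_injective (congrFun hab i)
    have hsupp : Function.support v ⊆ Set.range (fun (d : Fin k → ℕ+) (i : Fin k) => (d i : ℕ)) := by
      intro m hm
      simp only [Function.mem_support, hv] at hm
      by_cases hc : ∀ i, 1 ≤ m i ∧ m i ≤ x i
      · refine ⟨fun i => ⟨m i, (hc i).1⟩, rfl⟩
      · exact absurd (if_neg hc) hm
    have h1 : ∑' d : Fin k → ℕ+, u x d = ∑' m : Fin k → ℕ, v m := by
      rw [tsum_congr hcomp]
      exact hinj.tsum_eq hsupp
    have h2 : ∑' m : Fin k → ℕ, v m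
        = ∑ m ∈ Fintype.piFinset (fun i => Finset.Icc 1 (x i)), v m := by
      refine tsum_eq_sum ?_
      intro m hm
      simp only [Fintype.mem_piFinset, Finset.mem_Icc] at hm
      push_neg at hm
      refine if_neg ?_
      intro hc
      obtain ⟨i, hi⟩ := hm
      have h4 := hc i
      have h5 := hi h4.1
      omega
    have h3 : ∑ m ∈ Fintype.piFinset (fun i => Finset.Icc 1 (x i)), v m
        = ∑ m ∈ Fintype.piFinset (fun i => Finset.Icc 1 (x i)),
            G m * (∏ i, ((x i / m i : ℕ) : ℂ)) / (∏ i, ((x i : ℕ) : ℂ)) := by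
      refine Finset.sum_congr rfl fun m hm => ?_
      simp only [Fintype.mem_piFinset, Finset.mem_Icc] at hm
      simp only [hv]
      rw [if_pos (fun i => hm i), Finset.prod_div_distrib, mul_div_assoc]
    rw [h1, h2, h3, ← Finset.sum_div, ← swap_sum k f G hinv x]
  -- step 2: dominated convergence (Tannery)
  have main : Tendsto (fun x : Fin k → ℕ => ∑' d : Fin k → ℕ+, u x d) atTop
      (𝓝 (∑' d : Fin k → ℕ+, G (fun i => (d i : ℕ)) / ∏ i, (((d i : ℕ) : ℕ) : ℂ))) := by
    refine tendsto_tsum_of_dominated_convergence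
      (bound := fun d : Fin k → ℕ+ => ‖G (fun i => (d i : ℕ))‖ / ∏ i, (((d i : ℕ) : ℕ) : ℝ))
      ?_ ?_ ?_
    · exact h
    · intro d
      have hev : ∀ᶠ x : Fin k → ℕ in atTop, ∀ i, (d i : ℕ) ≤ x i := by
        filter_upwards [eventually_ge_atTop (fun i => (d i : ℕ))] with x hx
        exact fun i => hx i
      have hprod : Tendsto (fun x : Fin k → ℕ =>
          ∏ i, (((x i / (d i : ℕ) : ℕ) : ℂ) / ((x i : ℕ) : ℂ))) atTop
          (𝓝 (∏ i, (1 / (((d i : ℕ) : ℕ) : ℂ)))) := by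
        refine tendsto_finset_prod _ fun i _ => ?_
        exact (tendsto_nat_div_c (d i : ℕ) (d i).pos).comp (tendsto_eval k i)
      have hlim : Tendsto (fun x : Fin k → ℕ =>
          G (fun i => (d i : ℕ)) * ∏ i, (((x i / (d i : ℕ) : ℕ) : ℂ) / ((x i : ℕ) : ℂ)))
          atTop (𝓝 (G (fun i => (d i : ℕ)) * ∏ i, (1 / (((d i : ℕ) : ℕ) : ℂ)))) :=
        hprod.const_mul _
      have heq : G (fun i => (d i : ℕ)) * ∏ i, (1 / (((d i : ℕ) : ℕ) : ℂ))
          = G (fun i => (d i : ℕ)) / ∏ i, (((d i : ℕ) : ℕ) : ℂ) := by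
        rw [Finset.prod_div_distrib]
        simp [div_eq_mul_inv]
      rw [heq] at hlim
      refine Tendsto.congr' ?_ hlim
      filter_upwards [hev] with x hx
      exact (if_pos hx).symm
    · filter_upwards with x
      intro d
      by_cases hc : ∀ i, (d i : ℕ) ≤ x i
      · have hx0 : ∀ i, 0 < x i := fun i => lt_of_lt_of_le (d i).pos (hc i)
        rw [hu]
        simp only [if_pos hc]
        rw [norm_mul, norm_prod]
        have hfac : ∀ i, ‖((x i / (d i : ℕ) : ℕ) : ℂ) / ((x i : ℕ) : ℂ)‖
            ≤ 1 / (((d i : ℕ) : ℕ) : ℝ) := by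
          intro i
          rw [norm_div, Complex.norm_natCast, Complex.norm_natCast]
          rw [div_le_div_iff₀ (by exact_mod_cast hx0 i) (by exact_mod_cast (d i).pos)]
          have : ((x i / (d i : ℕ) : ℕ) : ℝ) * ((d i : ℕ) : ℝ) ≤ ((x i : ℕ) : ℝ) := by
            exact_mod_cast Nat.div_mul_le_self (x i) (d i : ℕ)
          linarith
        calc ‖G (fun i => (d i : ℕ))‖ * ∏ i, ‖((x i / (d i : ℕ) : ℕ) : ℂ) / ((x i : ℕ) : ℂ)‖
            ≤ ‖G (fun i => (d i : ℕ))‖ * ∏ i, (1 / (((d i : ℕ) : ℕ) : ℝ)) := by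
              refine mul_le_mul_of_nonneg_left ?_ (norm_nonneg _)
              refine Finset.prod_le_prod (fun i _ => norm_nonneg _) (fun i _ => hfac i)
          _ = ‖G (fun i => (d i : ℕ))‖ / ∏ i, (((d i : ℕ) : ℕ) : ℝ) := by
              rw [Finset.prod_div_distrib]
              simp [div_eq_mul_inv]
      · rw [hu]
        simp only [if_neg hc, norm_zero]
        positivity
  refine Tendsto.congr ?_ main
  intro x
  exact (key x).symm
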